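/- There is a constant C > 0 depending only on n such that the following holds. Let n ≥ 1, let q be an odd prime power, and let A ⊆ M_n(𝔽_q) with |A| ≥ C · q^{n²−1/4}. Then {a₁a₂ + a₃ + a₄ : a₁, a₂, a₃, a₄ ∈ A} = M_n(𝔽_q), i.e., every matrix M ∈ M_n(𝔽_q) can be written as M = a₁a₂ + a₃ + a₄ with a₁, a₂, a₃, a₄ ∈ A. -/

import Mathlib

open Matrix Finset

set_option maxHeartbeats 1000000
namespace StrongExpanderAux

noncomputable def myChar (F : Type) [Field F] [Fintype F] : AddChar F ℂ := by
  haveI hp : Fact (ringChar F).Prime := ⟨CharP.char_is_prime F _⟩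
  haveI : NeZero (ringChar F) := ⟨hp.out.ne_zero⟩
  have hζ : IsPrimitiveRoot (Complex.exp (2 * Real.pi * Complex.I / (ringChar F))) (ringChar F) :=
    Complex.isPrimitiveRoot_exp _ hp.out.ne_zero
  letI : Algebra (ZMod (ringChar F)) F := ZMod.algebra _ _
  exact (AddChar.zmodChar (ringChar F) hζ.pow_eq_one).compAddMonoidHom
    (Algebra.trace (ZMod (ringChar F)) F).toAddMonoidHom

lemma myChar_ne_one (F : Type) [Field F] [Fintype F] : myChar F ≠ 1 := by
  haveI hp : Fact (ringChar F).Prime := ⟨CharP.char_is_prime F _⟩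
  haveI : NeZero (ringChar F) := ⟨hp.out.ne_zero⟩
  have hζ : IsPrimitiveRoot (Complex.exp (2 * Real.pi * Complex.I / (ringChar F))) (ringChar F) :=
    Complex.isPrimitiveRoot_exp _ hp.out.ne_zero
  letI : Algebra (ZMod (ringChar F)) F := ZMod.algebra _ _
  obtain ⟨b, hb⟩ := FiniteField.trace_to_zmod_nondegenerate F (one_ne_zero (α := F))
  rw [one_mul] at hb
  rw [AddChar.ne_one_iff]
  refine ⟨b, ?_⟩
  show (AddChar.zmodChar (ringChar F) hζ.pow_eq_one) (Algebra.trace (ZMod (ringChar F)) F b) ≠ 1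
  rw [AddChar.zmodChar_apply]
  exact hζ.pow_ne_one_of_pos_of_lt
    (fun h => hb ((ZMod.val_eq_zero _).mp h)) (ZMod.val_lt _)

variable {n : ℕ} {F : Type} [Field F] [Fintype F] [DecidableEq F]

lemma char_sum_zero (ψ : AddChar F ℂ) (hψ : ψ ≠ 1)
    {y : Matrix (Fin n) (Fin n) F} (hy : y ≠ 0) :
    ∑ x : Matrix (Fin n) (Fin n) F, ψ ((y * x).trace) = 0 := by
  let f : Matrix (Fin n) (Fin n) F →+ F :=
    { toFun := fun x => (y * x).trace
      map_zero' := by simp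
      map_add' := fun a b => by show (y*(a+b)).trace = _; rw [mul_add, trace_add] }
  have key : (ψ.compAddMonoidHom f) ≠ 1 := by
    obtain ⟨t, ht⟩ := AddChar.ne_one_iff.mp hψ
    have hex : ∃ i j, y i j ≠ 0 := by
      by_contra hc; push_neg at hc; exact hy (by ext i j; simpa using hc i j)
    obtain ⟨i, j, hij⟩ := hex
    rw [AddChar.ne_one_iff]
    refine ⟨Matrix.single j i ((y i j)⁻¹ * t), ?_⟩
    have htr : (y * Matrix.single j i ((y i j)⁻¹ * t)).trace = t := by
      rw [Matrix.trace, Finset.sum_eq_single i]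
      · show (y * Matrix.single j i ((y i j)⁻¹ * t)) i i = t
        rw [Matrix.mul_single_apply_same, ← mul_assoc,
          mul_inv_cancel₀ hij, one_mul]
      · intro k _ hk
        show (y * Matrix.single j i ((y i j)⁻¹ * t)) k k = 0
        rw [Matrix.mul_single_apply_of_ne _ _ _ _ _ hk]
      · simp
    show ψ (f _) ≠ 1
    show ψ ((y * _).trace) ≠ 1
    rw [htr]; exact ht
  have h0 := AddChar.sum_eq_zero_of_ne_one key
  simpa [f] using h0

lemma char_sum_delta (ψ : AddChar F ℂ) (hψ : ψ ≠ 1) (y : Matrix (Fin n) (Fin n) F) :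
    ∑ x : Matrix (Fin n) (Fin n) F, ψ ((y * x).trace)
      = if y = 0 then ((Fintype.card (Matrix (Fin n) (Fin n) F) : ℕ) : ℂ) else 0 := by
  split_ifs with h
  · subst h; simp [Matrix.trace]
  · exact char_sum_zero ψ hψ h

lemma norm_sq_sum (ψ : AddChar F ℂ) (hψ : ψ ≠ 1) {ι : Type} [DecidableEq ι]
    (s : Finset ι) (f : ι → Matrix (Fin n) (Fin n) F) :
    ∑ x : Matrix (Fin n) (Fin n) F, ‖∑ b ∈ s, ψ ((f b * x).trace)‖^2
      = (Fintype.card (Matrix (Fin n) (Fin n) F) : ℝ)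
        * ((s ×ˢ s).filter fun p : ι × ι => f p.1 = f p.2).card := by
  have hC : ((∑ x : Matrix (Fin n) (Fin n) F, ‖∑ b ∈ s, ψ ((f b * x).trace)‖^2 : ℝ) : ℂ)
      = (((Fintype.card (Matrix (Fin n) (Fin n) F) : ℝ)
        * ((s ×ˢ s).filter fun p : ι × ι => f p.1 = f p.2).card : ℝ) : ℂ) := by
    calc ((∑ x : Matrix (Fin n) (Fin n) F, ‖∑ b ∈ s, ψ ((f b * x).trace)‖^2 : ℝ) : ℂ)
        = ∑ x : Matrix (Fin n) (Fin n) F,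
            (∑ b ∈ s, ψ ((f b * x).trace)) * (starRingEnd ℂ) (∑ b ∈ s, ψ ((f b * x).trace)) := by
          push_cast
          refine Finset.sum_congr rfl fun x _ => ?_
          rw [Complex.mul_conj']
      _ = ∑ x : Matrix (Fin n) (Fin n) F, ∑ b ∈ s, ∑ b' ∈ s,
            ψ ((f b * x).trace) * ψ (-((f b' * x).trace)) := by
          refine Finset.sum_congr rfl fun x _ => ?_
          rw [map_sum, Finset.sum_mul_sum]
          exact Finset.sum_congr rfl fun b _ => Finset.sum_congr rfl fun b' _ => by
            rw [AddChar.map_neg_eq_conj]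
      _ = ∑ x : Matrix (Fin n) (Fin n) F, ∑ b ∈ s, ∑ b' ∈ s,
            ψ (((f b - f b') * x).trace) := by
          refine Finset.sum_congr rfl fun x _ => Finset.sum_congr rfl fun b _ =>
            Finset.sum_congr rfl fun b' _ => ?_
          rw [← AddChar.map_add_eq_mul, sub_mul, trace_sub, sub_eq_add_neg]
      _ = ∑ b ∈ s, ∑ b' ∈ s, ∑ x : Matrix (Fin n) (Fin n) F,
            ψ (((f b - f b') * x).trace) := by
          rw [Finset.sum_comm]
          exact Finset.sum_congr rfl fun b _ => Finset.sum_comm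
      _ = ∑ b ∈ s, ∑ b' ∈ s, (if f b = f b'
            then ((Fintype.card (Matrix (Fin n) (Fin n) F) : ℕ) : ℂ) else 0) := by
          refine Finset.sum_congr rfl fun b _ => Finset.sum_congr rfl fun b' _ => ?_
          rw [char_sum_delta ψ hψ]
          simp [sub_eq_zero]
      _ = ∑ p ∈ (s ×ˢ s).filter (fun p : ι × ι => f p.1 = f p.2),
            ((Fintype.card (Matrix (Fin n) (Fin n) F) : ℕ) : ℂ) := by
          rw [Finset.sum_filter, Finset.sum_product]
      _ = _ := by
          rw [Finset.sum_const, nsmul_eq_mul]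
          push_cast
          ring
  exact_mod_cast hC

lemma ker_card_le {ξ : Matrix (Fin n) (Fin n) F} (hξ : ξ ≠ 0) :
    ((Finset.univ.filter fun c : Matrix (Fin n) (Fin n) F => c * ξ = 0).card : ℕ)
      ≤ Fintype.card F ^ ((n-1)*n) := by
  classical
  set W := LinearMap.ker (Matrix.vecMulLinear ξ) with hW
  haveI : Fintype W := Fintype.ofFinite W
  have hWne : W ≠ ⊤ := by
    intro h
    apply hξ
    ext i j
    have hv : Pi.single i 1 ∈ W := h ▸ Submodule.mem_top
    have := congrFun (LinearMap.mem_ker.mp hv) j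
    rw [Matrix.vecMulLinear_apply, Matrix.single_one_vecMul] at this
    simpa using this
  have hfr : Module.finrank F W ≤ n - 1 := by
    have h1 : Module.finrank F W < Module.finrank F (Fin n → F) :=
      Submodule.finrank_lt hWne
    rw [Module.finrank_fin_fun] at h1
    omega
  have hcardW : Fintype.card W ≤ Fintype.card F ^ (n-1) := by
    rw [Module.card_eq_pow_finrank (K := F) (V := W)]
    exact Nat.pow_le_pow_right Fintype.card_pos hfr
  have hrow : ∀ c : Matrix (Fin n) (Fin n) F, c * ξ = 0 → ∀ i, c i ∈ W := by
    intro c hc i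
    rw [LinearMap.mem_ker, Matrix.vecMulLinear_apply]
    funext j
    have := congrFun (congrFun hc i) j
    simpa [Matrix.mul_apply, Matrix.vecMul, dotProduct] using this
  have hinj : Function.Injective
      (fun c : {c : Matrix (Fin n) (Fin n) F // c * ξ = 0} =>
        (fun i => (⟨c.1 i, hrow c.1 c.2 i⟩ : W) : Fin n → W)) := by
    intro c c' h
    apply Subtype.ext
    ext i j
    have := congrFun h i
    exact congrFun (congrArg Subtype.val this) j
  calc (Finset.univ.filter fun c : Matrix (Fin n) (Fin n) F => c * ξ = 0).card
      = Fintype.card {c : Matrix (Fin n) (Fin n) F // c * ξ = 0} :=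
        (Fintype.card_subtype _).symm
    _ ≤ Fintype.card (Fin n → W) := Fintype.card_le_of_injective _ hinj
    _ = Fintype.card W ^ n := by rw [Fintype.card_fun]; simp
    _ ≤ (Fintype.card F ^ (n-1)) ^ n := Nat.pow_le_pow_left hcardW n
    _ = Fintype.card F ^ ((n-1)*n) := by rw [← pow_mul]


lemma diag_filter_card {ι : Type} [DecidableEq ι] (s : Finset ι) (f : ι → Matrix (Fin n) (Fin n) F)
    (hf : Function.Injective f) :
    ((s ×ˢ s).filter fun p : ι × ι => f p.1 = f p.2).card = s.card := by
  have he : ((s ×ˢ s).filter fun p : ι × ι => f p.1 = f p.2) = s.image (fun a => (a, a)) := by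
    ext p
    simp only [Finset.mem_filter, Finset.mem_product, Finset.mem_image]
    constructor
    · rintro ⟨⟨h1, h2⟩, h3⟩
      exact ⟨p.1, h1, Prod.ext rfl (hf h3)⟩
    · rintro ⟨a, ha, rfl⟩
      exact ⟨⟨ha, ha⟩, rfl⟩
  rw [he, Finset.card_image_of_injective]
  intro a b h
  exact (Prod.ext_iff.mp h).1

lemma parseval (ψ : AddChar F ℂ) (hψ : ψ ≠ 1) (A : Finset (Matrix (Fin n) (Fin n) F)) :
    ∑ ξ : Matrix (Fin n) (Fin n) F, ‖∑ a ∈ A, ψ ((ξ * a).trace)‖^2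
      = (Fintype.card (Matrix (Fin n) (Fin n) F) : ℝ) * A.card := by
  have h1 : ∀ ξ : Matrix (Fin n) (Fin n) F,
      (∑ a ∈ A, ψ ((ξ * a).trace)) = ∑ a ∈ A, ψ ((a * ξ).trace) :=
    fun ξ => Finset.sum_congr rfl fun a _ => by rw [Matrix.trace_mul_comm]
  calc ∑ ξ : Matrix (Fin n) (Fin n) F, ‖∑ a ∈ A, ψ ((ξ * a).trace)‖^2
      = ∑ ξ : Matrix (Fin n) (Fin n) F, ‖∑ a ∈ A, ψ ((a * ξ).trace)‖^2 := by
        refine Finset.sum_congr rfl fun ξ _ => ?_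
        rw [h1]
    _ = (Fintype.card (Matrix (Fin n) (Fin n) F) : ℝ)
        * ((A ×ˢ A).filter fun p => p.1 = p.2).card := norm_sq_sum ψ hψ A (fun a => a)
    _ = _ := by rw [diag_filter_card A (fun a => a) (fun a b h => h)]

lemma S_bound (ψ : AddChar F ℂ) (hψ : ψ ≠ 1) (A : Finset (Matrix (Fin n) (Fin n) F))
    {ξ : Matrix (Fin n) (Fin n) F} (hξ : ξ ≠ 0) :
    ‖∑ a1 ∈ A, ∑ a2 ∈ A, ψ ((ξ * (a1 * a2)).trace)‖^2
      ≤ (A.card : ℝ) * ((Fintype.card (Matrix (Fin n) (Fin n) F) : ℝ)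
          * ((A.card : ℝ) * (Fintype.card F ^ ((n-1)*n) : ℕ))) := by
  have hT : ∀ a1 : Matrix (Fin n) (Fin n) F,
      (∑ a2 ∈ A, ψ ((ξ * (a1 * a2)).trace)) = ∑ b ∈ A, ψ (((b * ξ) * a1).trace) := by
    intro a1
    refine Finset.sum_congr rfl fun b _ => ?_
    rw [← mul_assoc, Matrix.trace_mul_comm, ← mul_assoc]
  -- Cauchy-Schwarz
  have hCS : ‖∑ a1 ∈ A, ∑ a2 ∈ A, ψ ((ξ * (a1 * a2)).trace)‖^2
      ≤ (A.card : ℝ) * ∑ a1 ∈ A, ‖∑ b ∈ A, ψ (((b * ξ) * a1).trace)‖^2 := by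
    calc ‖∑ a1 ∈ A, ∑ a2 ∈ A, ψ ((ξ * (a1 * a2)).trace)‖^2
        ≤ (∑ a1 ∈ A, ‖∑ a2 ∈ A, ψ ((ξ * (a1 * a2)).trace)‖)^2 := by
          have := norm_sum_le A (fun a1 => ∑ a2 ∈ A, ψ ((ξ * (a1 * a2)).trace))
          exact pow_le_pow_left₀ (norm_nonneg _) this 2
      _ ≤ (A.card : ℝ) * ∑ a1 ∈ A, ‖∑ a2 ∈ A, ψ ((ξ * (a1 * a2)).trace)‖^2 :=
          sq_sum_le_card_mul_sum_sq
      _ = (A.card : ℝ) * ∑ a1 ∈ A, ‖∑ b ∈ A, ψ (((b * ξ) * a1).trace)‖^2 := by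
          rw [Finset.sum_congr rfl fun a1 _ => by rw [hT a1]]
  have hsub : ∑ a1 ∈ A, ‖∑ b ∈ A, ψ (((b * ξ) * a1).trace)‖^2
      ≤ ∑ x : Matrix (Fin n) (Fin n) F, ‖∑ b ∈ A, ψ (((b * ξ) * x).trace)‖^2 :=
    Finset.sum_le_sum_of_subset_of_nonneg (Finset.subset_univ A)
      (fun x _ _ => by positivity)
  have hns := norm_sq_sum ψ hψ A (fun b => b * ξ)
  -- count bound
  have hcount : (((A ×ˢ A).filter fun p : _ × _ => p.1 * ξ = p.2 * ξ).card : ℝ)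
      ≤ (A.card : ℝ) * (Fintype.card F ^ ((n-1)*n) : ℕ) := by
    have hle : ((A ×ˢ A).filter fun p : _ × _ => p.1 * ξ = p.2 * ξ).card
        ≤ (A ×ˢ (Finset.univ.filter fun c : Matrix (Fin n) (Fin n) F => c * ξ = 0)).card := by
      apply Finset.card_le_card_of_injOn (fun p => (p.1, p.1 - p.2))
      · intro p hp
        rw [Finset.mem_coe, Finset.mem_filter] at hp
        obtain ⟨hp1, hp2⟩ := hp
        rw [Finset.mem_product] at hp1
        rw [Finset.mem_coe, Finset.mem_product]
        refine ⟨hp1.1, ?_⟩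
        rw [Finset.mem_filter]
        exact ⟨Finset.mem_univ _, by rw [sub_mul, hp2, sub_self]⟩
      · intro p _ r _ h
        have h1 : p.1 = r.1 := (Prod.ext_iff.mp h).1
        have h2 : p.1 - p.2 = r.1 - r.2 := (Prod.ext_iff.mp h).2
        have h3 : p.2 = r.2 := by
          have h4 := h2
          rw [h1, sub_right_inj] at h4
          exact h4
        exact Prod.ext h1 h3
    have := ker_card_le (n := n) hξ
    calc (((A ×ˢ A).filter fun p : _ × _ => p.1 * ξ = p.2 * ξ).card : ℝ)
        ≤ ((A ×ˢ (Finset.univ.filter fun c : Matrix (Fin n) (Fin n) F => c * ξ = 0)).card : ℝ) := by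
          exact_mod_cast hle
      _ = (A.card : ℝ) * ((Finset.univ.filter fun c : Matrix (Fin n) (Fin n) F => c * ξ = 0).card : ℝ) := by
          rw [Finset.card_product]; push_cast; ring
      _ ≤ (A.card : ℝ) * (Fintype.card F ^ ((n-1)*n) : ℕ) := by
          apply mul_le_mul_of_nonneg_left _ (by positivity)
          exact_mod_cast this
  calc ‖∑ a1 ∈ A, ∑ a2 ∈ A, ψ ((ξ * (a1 * a2)).trace)‖^2
      ≤ (A.card : ℝ) * ∑ a1 ∈ A, ‖∑ b ∈ A, ψ (((b * ξ) * a1).trace)‖^2 := hCS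
    _ ≤ (A.card : ℝ) * ∑ x : Matrix (Fin n) (Fin n) F, ‖∑ b ∈ A, ψ (((b * ξ) * x).trace)‖^2 :=
        mul_le_mul_of_nonneg_left hsub (by positivity)
    _ = (A.card : ℝ) * ((Fintype.card (Matrix (Fin n) (Fin n) F) : ℝ)
          * (((A ×ˢ A).filter fun p : _ × _ => p.1 * ξ = p.2 * ξ).card : ℝ)) := by
        rw [hns]
    _ ≤ _ := by
        apply mul_le_mul_of_nonneg_left _ (by positivity)
        exact mul_le_mul_of_nonneg_left hcount (by positivity)


lemma card_matrix_eq : Fintype.card (Matrix (Fin n) (Fin n) F) = Fintype.card F ^ (n * n) := by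
  rw [← Nat.card_eq_fintype_card, Matrix, Nat.card_fun, Nat.card_fun, Nat.card_eq_fintype_card (α := F),
    Nat.card_fin, ← pow_mul]

theorem key (hn : 1 ≤ n) (A : Finset (Matrix (Fin n) (Fin n) F))
    (hA : ((Fintype.card F ^ (3*(n*n) + (n-1)*n) : ℕ) : ℝ) < (A.card : ℝ)^4)
    (M : Matrix (Fin n) (Fin n) F) :
    ∃ a₁ ∈ A, ∃ a₂ ∈ A, ∃ a₃ ∈ A, ∃ a₄ ∈ A, M = a₁ * a₂ + a₃ + a₄ := by
  by_contra hcon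
  push_neg at hcon
  obtain ⟨ψ, hψ⟩ : ∃ ψ : AddChar F ℂ, ψ ≠ 1 := ⟨myChar F, myChar_ne_one F⟩
  set N : ℕ := Fintype.card (Matrix (Fin n) (Fin n) F) with hN
  set q : ℕ := Fintype.card F with hq
  set S : Matrix (Fin n) (Fin n) F → ℂ :=
    fun ξ => ∑ a1 ∈ A, ∑ a2 ∈ A, ψ ((ξ * (a1*a2)).trace) with hS
  set Wc : Matrix (Fin n) (Fin n) F → ℂ := fun ξ => ∑ a ∈ A, ψ ((ξ * a).trace) with hWdef
  have hZ0 : ∑ a1 ∈ A, ∑ a2 ∈ A, ∑ a3 ∈ A, ∑ a4 ∈ A,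
      (∑ ξ : Matrix (Fin n) (Fin n) F, ψ ((ξ * (a1*a2 + a3 + a4 - M)).trace)) = 0 := by
    refine Finset.sum_eq_zero fun a1 h1 => Finset.sum_eq_zero fun a2 h2 =>
      Finset.sum_eq_zero fun a3 h3 => Finset.sum_eq_zero fun a4 h4 => ?_
    have hne : a1*a2 + a3 + a4 - M ≠ 0 := by
      intro h
      rw [sub_eq_zero] at h
      exact hcon a1 h1 a2 h2 a3 h3 a4 h4 h.symm
    rw [Finset.sum_congr rfl fun ξ _ =>
      (by rw [Matrix.trace_mul_comm] :
        ψ ((ξ * (a1*a2 + a3 + a4 - M)).trace) = ψ (((a1*a2+a3+a4-M) * ξ).trace))]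
    exact char_sum_zero ψ hψ hne
  have hfac : ∑ ξ : Matrix (Fin n) (Fin n) F, S ξ * (Wc ξ * (Wc ξ * ψ ((ξ * (-M)).trace)))
      = ∑ a1 ∈ A, ∑ a2 ∈ A, ∑ a3 ∈ A, ∑ a4 ∈ A,
        (∑ ξ : Matrix (Fin n) (Fin n) F, ψ ((ξ * (a1*a2 + a3 + a4 - M)).trace)) := by
    have expand : ∀ a1 a2 a3 a4 : Matrix (Fin n) (Fin n) F, ∀ ξ : Matrix (Fin n) (Fin n) F,
        ψ ((ξ * (a1*a2 + a3 + a4 - M)).trace)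
          = ψ ((ξ * (a1*a2)).trace) * (ψ ((ξ * a3).trace)
            * (ψ ((ξ * a4).trace) * ψ ((ξ * (-M)).trace))) := by
      intro a1 a2 a3 a4 ξ
      rw [show a1*a2 + a3 + a4 - M = a1*a2 + (a3 + (a4 + -M)) by
        rw [sub_eq_add_neg, add_assoc, add_assoc]]
      rw [mul_add, mul_add, mul_add, trace_add, trace_add, trace_add,
        AddChar.map_add_eq_mul, AddChar.map_add_eq_mul, AddChar.map_add_eq_mul]
    have perxi : ∀ ξ : Matrix (Fin n) (Fin n) F,
        S ξ * (Wc ξ * (Wc ξ * ψ ((ξ * (-M)).trace)))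
        = ∑ a1 ∈ A, ∑ a2 ∈ A, ∑ a3 ∈ A, ∑ a4 ∈ A,
            ψ ((ξ * (a1*a2 + a3 + a4 - M)).trace) := by
      intro ξ
      have e4 : ∀ a1 a2 a3 : Matrix (Fin n) (Fin n) F,
          (∑ a4 ∈ A, ψ ((ξ * (a1*a2 + a3 + a4 - M)).trace))
          = ψ ((ξ * (a1*a2)).trace) * (ψ ((ξ * a3).trace)
              * ((∑ a4 ∈ A, ψ ((ξ * a4).trace)) * ψ ((ξ * (-M)).trace))) := by
        intro a1 a2 a3
        rw [Finset.sum_congr rfl fun a4 _ => expand a1 a2 a3 a4 ξ]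
        rw [← Finset.mul_sum, ← Finset.mul_sum, ← Finset.sum_mul]
      have e3 : ∀ a1 a2 : Matrix (Fin n) (Fin n) F,
          (∑ a3 ∈ A, ∑ a4 ∈ A, ψ ((ξ * (a1*a2 + a3 + a4 - M)).trace))
          = ψ ((ξ * (a1*a2)).trace) * ((∑ a3 ∈ A, ψ ((ξ * a3).trace))
              * ((∑ a4 ∈ A, ψ ((ξ * a4).trace)) * ψ ((ξ * (-M)).trace))) := by
        intro a1 a2
        rw [Finset.sum_congr rfl fun a3 _ => e4 a1 a2 a3]
        rw [← Finset.mul_sum, ← Finset.sum_mul]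
      have e2 : (∑ a1 ∈ A, ∑ a2 ∈ A, ∑ a3 ∈ A, ∑ a4 ∈ A,
            ψ ((ξ * (a1*a2 + a3 + a4 - M)).trace))
          = (∑ a1 ∈ A, ∑ a2 ∈ A, ψ ((ξ * (a1*a2)).trace))
            * ((∑ a3 ∈ A, ψ ((ξ * a3).trace))
              * ((∑ a4 ∈ A, ψ ((ξ * a4).trace)) * ψ ((ξ * (-M)).trace))) := by
        rw [Finset.sum_congr rfl fun a1 _ => Finset.sum_congr rfl fun a2 _ => e3 a1 a2]
        rw [Finset.sum_congr rfl fun a1 (_ : a1 ∈ A) => (Finset.sum_mul A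
          (fun a2 => ψ ((ξ * (a1*a2)).trace)) _).symm]
        rw [← Finset.sum_mul]
      rw [hS, hWdef, e2]
    rw [Finset.sum_congr rfl fun ξ _ => perxi ξ]
    rw [Finset.sum_comm]
    refine Finset.sum_congr rfl fun a1 _ => ?_
    rw [Finset.sum_comm]
    refine Finset.sum_congr rfl fun a2 _ => ?_
    rw [Finset.sum_comm]
    refine Finset.sum_congr rfl fun a3 _ => ?_
    rw [Finset.sum_comm]
  have hzero_term : S 0 * (Wc 0 * (Wc 0 * ψ (((0 : Matrix (Fin n) (Fin n) F) * (-M)).trace)))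
      = ((A.card : ℂ))^4 := by
    have h1 : S 0 = (A.card : ℂ)^2 := by
      rw [hS]
      simp only [Matrix.zero_mul, Matrix.trace_zero, AddChar.map_zero_eq_one,
        Finset.sum_const, nsmul_eq_mul, mul_one]
      ring
    have h2 : Wc 0 = (A.card : ℂ) := by
      rw [hWdef]
      simp only [Matrix.zero_mul, Matrix.trace_zero, AddChar.map_zero_eq_one,
        Finset.sum_const, nsmul_eq_mul, mul_one]
    rw [h1, h2]
    simp only [Matrix.zero_mul, Matrix.trace_zero, AddChar.map_zero_eq_one, mul_one]
    ring
  have hsplit : (∑ ξ ∈ Finset.univ.erase (0 : Matrix (Fin n) (Fin n) F),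
        S ξ * (Wc ξ * (Wc ξ * ψ ((ξ * (-M)).trace)))) + ((A.card : ℂ))^4 = 0 := by
    rw [← hzero_term, Finset.sum_erase_add _ _ (Finset.mem_univ 0), hfac]
    exact hZ0
  have hneg : ((A.card : ℂ))^4
      = -(∑ ξ ∈ Finset.univ.erase (0 : Matrix (Fin n) (Fin n) F),
          S ξ * (Wc ξ * (Wc ξ * ψ ((ξ * (-M)).trace)))) :=
    eq_neg_of_add_eq_zero_right hsplit
  -- pass to norms
  set B : ℝ := Real.sqrt ((A.card : ℝ) * ((N : ℝ) * ((A.card : ℝ) * (q ^ ((n-1)*n) : ℕ))))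
    with hB
  have hBnonneg : 0 ≤ B := Real.sqrt_nonneg _
  have hSle : ∀ ξ ∈ Finset.univ.erase (0 : Matrix (Fin n) (Fin n) F), ‖S ξ‖ ≤ B := by
    intro ξ hξ
    have hξ0 : ξ ≠ 0 := Finset.ne_of_mem_erase hξ
    have hb := S_bound ψ hψ A hξ0
    rw [hB]
    have : ‖S ξ‖ = Real.sqrt (‖S ξ‖^2) := by
      rw [Real.sqrt_sq (norm_nonneg _)]
    rw [this]
    exact Real.sqrt_le_sqrt hb
  have hmain : ((A.card : ℝ))^4 ≤ B * ((N : ℝ) * A.card) := by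
    calc ((A.card : ℝ))^4
        = ‖((A.card : ℂ))^4‖ := by
          rw [norm_pow, Complex.norm_natCast]
      _ = ‖∑ ξ ∈ Finset.univ.erase (0 : Matrix (Fin n) (Fin n) F),
            S ξ * (Wc ξ * (Wc ξ * ψ ((ξ * (-M)).trace)))‖ := by
          rw [hneg, norm_neg]
      _ ≤ ∑ ξ ∈ Finset.univ.erase (0 : Matrix (Fin n) (Fin n) F),
            ‖S ξ * (Wc ξ * (Wc ξ * ψ ((ξ * (-M)).trace)))‖ := norm_sum_le _ _
      _ ≤ ∑ ξ ∈ Finset.univ.erase (0 : Matrix (Fin n) (Fin n) F), B * ‖Wc ξ‖^2 := by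
          refine Finset.sum_le_sum fun ξ hξ => ?_
          rw [norm_mul, norm_mul, norm_mul, AddChar.norm_apply, mul_one, ← sq]
          exact mul_le_mul_of_nonneg_right (hSle ξ hξ) (by positivity)
      _ = B * ∑ ξ ∈ Finset.univ.erase (0 : Matrix (Fin n) (Fin n) F), ‖Wc ξ‖^2 := by
          rw [Finset.mul_sum]
      _ ≤ B * ∑ ξ : Matrix (Fin n) (Fin n) F, ‖Wc ξ‖^2 := by
          apply mul_le_mul_of_nonneg_left _ hBnonneg
          exact Finset.sum_le_sum_of_subset_of_nonneg (Finset.erase_subset _ _)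
            (fun x _ _ => by positivity)
      _ = B * ((N : ℝ) * A.card) := by
          rw [hWdef]
          rw [parseval ψ hψ A]
  -- square and conclude
  have hApos : (0:ℝ) < (A.card : ℝ) := by
    rcases Nat.eq_zero_or_pos A.card with h | h
    · rw [h] at hA
      norm_num at hA
      exact absurd hA (not_lt.mpr (by positivity))
    · exact_mod_cast h
  have hsq : ((A.card : ℝ))^8 ≤ ((A.card : ℝ) * ((N : ℝ) * ((A.card : ℝ) * (q ^ ((n-1)*n) : ℕ))))
      * ((N : ℝ) * A.card)^2 := by
    have h1 : (((A.card : ℝ))^4)^2 ≤ (B * ((N : ℝ) * A.card))^2 := by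
      apply pow_le_pow_left₀ (by positivity) hmain
    rw [mul_pow] at h1
    rw [hB, Real.sq_sqrt (by positivity)] at h1
    calc ((A.card : ℝ))^8 = (((A.card : ℝ))^4)^2 := by ring
      _ ≤ _ := h1
  have hfinal : ((A.card : ℝ))^4 ≤ ((q:ℝ) ^ (3*(n*n) + (n-1)*n)) := by
    have hNq : (N : ℝ) = (q : ℝ)^(n*n) := by
      rw [hN, hq]
      exact_mod_cast card_matrix_eq
    have h2 : ((A.card : ℝ))^8 ≤ ((A.card : ℝ))^4 * ((q:ℝ) ^ (3*(n*n) + (n-1)*n)) := by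
      calc ((A.card : ℝ))^8
          ≤ ((A.card : ℝ) * ((N : ℝ) * ((A.card : ℝ) * (q ^ ((n-1)*n) : ℕ))))
            * ((N : ℝ) * A.card)^2 := hsq
        _ = ((A.card : ℝ))^4 * ((q:ℝ) ^ (3*(n*n) + (n-1)*n)) := by
            rw [hNq]
            push_cast
            ring
    have h3 : (0:ℝ) < ((A.card : ℝ))^4 := by positivity
    nlinarith [h2, h3]
  have : ((Fintype.card F ^ (3*(n*n) + (n-1)*n) : ℕ) : ℝ) = (q:ℝ) ^ (3*(n*n) + (n-1)*n) := by
    rw [hq]; push_cast; rfl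
  rw [this] at hA
  exact absurd hfinal (not_le.mpr hA)

end StrongExpanderAux

/-- xy + z + t is a strong expander over M_n(F_q) with exponent 1/4. -/
theorem strong_expander_xy_add_z_add_t (n : ℕ) (hn : 1 ≤ n) :
    ∃ C : ℝ, 0 < C ∧
      ∀ (F : Type) [Field F] [Fintype F],
        Odd (Fintype.card F) →
        ∀ A : Set (Matrix (Fin n) (Fin n) F),
          C * (Fintype.card F : ℝ) ^ ((n : ℝ) ^ 2 - 1 / 4) ≤ (A.ncard : ℝ) →
          ∀ M : Matrix (Fin n) (Fin n) F,
            ∃ a₁ ∈ A, ∃ a₂ ∈ A, ∃ a₃ ∈ A, ∃ a₄ ∈ A, M = a₁ * a₂ + a₃ + a₄ := by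
  classical
  refine ⟨2, by norm_num, ?_⟩
  intro F _ _ _hodd A hA M
  have hfin : A.Finite := Set.toFinite A
  set As : Finset (Matrix (Fin n) (Fin n) F) := hfin.toFinset with hAs
  have hcard : (A.ncard : ℝ) = (As.card : ℝ) := by
    rw [Set.ncard_eq_toFinset_card A hfin]
  rw [hcard] at hA
  set q : ℝ := (Fintype.card F : ℝ) with hq
  have hq0 : (0:ℝ) ≤ q := by positivity
  have hq1 : (1:ℝ) ≤ q := by
    rw [hq]; exact_mod_cast Fintype.card_pos
  set X : ℝ := q ^ ((n : ℝ) ^ 2 - 1 / 4) with hX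
  have hX0 : 0 ≤ X := by rw [hX]; positivity
  -- a^4 ≥ 16 X^4
  have h16 : 16 * X^4 ≤ ((As.card : ℝ))^4 := by
    have h1 : (2 * X)^4 ≤ ((As.card : ℝ))^4 :=
      pow_le_pow_left₀ (by positivity) hA 4
    nlinarith [h1]
  -- X^4 = q ^ (4 n^2 - 1 : ℕ)
  have hX4 : X^4 = ((Fintype.card F ^ (4 * n^2 - 1) : ℕ) : ℝ) := by
    have e1 : X^4 = q ^ (((n : ℝ) ^ 2 - 1 / 4) * 4) := by
      rw [hX, ← Real.rpow_natCast (q ^ ((n : ℝ) ^ 2 - 1 / 4)) 4, ← Real.rpow_mul hq0]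
      norm_num
    have e2 : ((n : ℝ) ^ 2 - 1 / 4) * 4 = ((4 * n^2 - 1 : ℕ) : ℝ) := by
      have h1 : 1 ≤ 4 * n^2 := by nlinarith [hn]
      push_cast [h1]
      ring
    rw [e1, e2, Real.rpow_natCast]
    push_cast
    ring
  -- exponent comparison
  have hexp : Fintype.card F ^ (3*(n*n) + (n-1)*n) ≤ Fintype.card F ^ (4 * n^2 - 1) := by
    apply Nat.pow_le_pow_right Fintype.card_pos
    obtain ⟨m, rfl⟩ : ∃ m, n = m + 1 := ⟨n - 1, by omega⟩
    have h1 : (m + 1 - 1) = m := by omega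
    rw [h1]
    have h2 : 4 * (m+1)^2 - 1 = 4*(m*m) + 8*m + 3 := by ring_nf; omega
    rw [h2]
    nlinarith
  have hkey : ((Fintype.card F ^ (3*(n*n) + (n-1)*n) : ℕ) : ℝ) < ((As.card : ℝ))^4 := by
    calc ((Fintype.card F ^ (3*(n*n) + (n-1)*n) : ℕ) : ℝ)
        ≤ ((Fintype.card F ^ (4 * n^2 - 1) : ℕ) : ℝ) := by exact_mod_cast hexp
      _ < 16 * ((Fintype.card F ^ (4 * n^2 - 1) : ℕ) : ℝ) := by
          have hpos : (0:ℝ) < ((Fintype.card F ^ (4 * n^2 - 1) : ℕ) : ℝ) := by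
            have : 0 < Fintype.card F ^ (4 * n^2 - 1) := Nat.pow_pos Fintype.card_pos
            exact_mod_cast this
          linarith
      _ = 16 * X^4 := by rw [hX4]
      _ ≤ ((As.card : ℝ))^4 := h16
  obtain ⟨a1, h1, a2, h2, a3, h3, a4, h4, hM⟩ := StrongExpanderAux.key hn As hkey M
  exact ⟨a1, hfin.mem_toFinset.mp h1, a2, hfin.mem_toFinset.mp h2,
    a3, hfin.mem_toFinset.mp h3, a4, hfin.mem_toFinset.mp h4, hM⟩
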